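/- Let 0 < a ≤ b be real numbers, λ ∈ (0,1) and q > 1. Then b − (λ a^q + (1−λ) b^q)^{1/q} ≤ (1/q) · b · λ · (1−λ)^{(1/q)−1} · (1 − (a/b)^q). -/
import Mathlib

/-- The key elementary inequality in the proof of Proposition 4.1:
for `0 < a ≤ b`, `λ ∈ (0,1)` and `q > 1`,
`b − (λ a^q + (1−λ) b^q)^{1/q} ≤ (1/q) b λ (1−λ)^{1/q−1} (1 − (a/b)^q)`. -/
theorem stmt_2 (a b lam q : ℝ) (ha : 0 < a) (hab : a ≤ b)
    (hlam : lam ∈ Set.Ioo (0 : ℝ) 1) (hq : 1 < q) :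
    b - (lam * a ^ q + (1 - lam) * b ^ q) ^ (1 / q) ≤
      (1 / q) * b * lam * (1 - lam) ^ (1 / q - 1) * (1 - (a / b) ^ q) := by
  obtain ⟨hl0, hl1⟩ := hlam
  have hb : 0 < b := lt_of_lt_of_le ha hab
  have hq0 : 0 < q := lt_trans one_pos hq
  set p : ℝ := 1 / q with hp_def
  have hp0 : 0 < p := by positivity
  have hp1 : p < 1 := by rw [hp_def, div_lt_one hq0]; exact hq
  set t : ℝ := (a / b) ^ q with ht_def
  have ht0 : 0 < t := Real.rpow_pos_of_pos (div_pos ha hb) q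
  have ht1 : t ≤ 1 := Real.rpow_le_one (by positivity) (div_le_one_of_le₀ hab hb.le) hq0.le
  set s : ℝ := lam * t + (1 - lam) with hs_def
  have hs0 : 0 < s := by nlinarith
  have hs_ge : 1 - lam ≤ s := by nlinarith
  -- rewrite the inner expression
  have key : lam * a ^ q + (1 - lam) * b ^ q = b ^ q * s := by
    have : a ^ q = t * b ^ q := by
      rw [ht_def, Real.div_rpow ha.le hb.le]
      field_simp
    rw [this, hs_def]; ring
  have hbq : (b ^ q) ^ p = b := by
    rw [← Real.rpow_mul hb.le, mul_one_div_cancel hq0.ne', Real.rpow_one]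
  have hinner : (lam * a ^ q + (1 - lam) * b ^ q) ^ p = b * s ^ p := by
    rw [key, Real.mul_rpow (by positivity) hs0.le, hbq]
  rw [hinner]
  -- weighted AM-GM: s^(1-p) ≤ (1-p) s + p
  have amgm : s ^ (1 - p) * (1 : ℝ) ^ p ≤ (1 - p) * s + p * 1 :=
    Real.geom_mean_le_arith_mean2_weighted (by linarith) hp0.le hs0.le zero_le_one
      (by ring)
  have amgm' : s ^ (1 - p) ≤ (1 - p) * s + p := by
    simpa using amgm
  have hcancel : s ^ (1 - p) * s ^ (p - 1) = 1 := by
    rw [← Real.rpow_add hs0]; norm_num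
  have hsp : s ^ (p - 1) * s = s ^ p := by
    nth_rewrite 2 [← Real.rpow_one s]
    rw [← Real.rpow_add hs0]; norm_num
  have hsp1_pos : 0 < s ^ (p - 1) := Real.rpow_pos_of_pos hs0 _
  -- tangent inequality: 1 ≤ ((1-p) s + p) * s^(p-1), hence 1 - s^p ≤ p s^(p-1) (1-s)
  have tang : 1 - s ^ p ≤ p * s ^ (p - 1) * (1 - s) := by
    have h1 : (1 : ℝ) ≤ ((1 - p) * s + p) * s ^ (p - 1) := by
      calc (1 : ℝ) = s ^ (1 - p) * s ^ (p - 1) := hcancel.symm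
        _ ≤ ((1 - p) * s + p) * s ^ (p - 1) :=
            mul_le_mul_of_nonneg_right amgm' hsp1_pos.le
    nlinarith [hsp]
  -- monotonicity: s^(p-1) ≤ (1-lam)^(p-1)
  have hmono : s ^ (p - 1) ≤ (1 - lam) ^ (p - 1) :=
    Real.rpow_le_rpow_of_nonpos (by linarith) hs_ge (by linarith)
  have h1s : 1 - s = lam * (1 - t) := by rw [hs_def]; ring
  have hfinal : 1 - s ^ p ≤ p * (1 - lam) ^ (p - 1) * (lam * (1 - t)) := by
    calc 1 - s ^ p ≤ p * s ^ (p - 1) * (1 - s) := tang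
      _ = p * s ^ (p - 1) * (lam * (1 - t)) := by rw [h1s]
      _ ≤ p * (1 - lam) ^ (p - 1) * (lam * (1 - t)) := by
          apply mul_le_mul_of_nonneg_right _ (by nlinarith)
          exact mul_le_mul_of_nonneg_left hmono hp0.le
  nlinarith [hfinal]
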